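/- arXiv:1512.07290 — 6 statements merged into one kernel-verified Lean document; each statement's English description precedes it below -/
import Mathlib

section
/- Let N, M, K be positive integers with N < K and M < K. Let E2 be a fixed K×M complex matrix of full column rank (rank E2 = M). Then for almost every N×K complex matrix E1 (with respect to Lebesgue measure on the space of N×K complex matrices), the product E1·E2 has rank min(N, M). -/
open MeasureTheory


lemma my_measurable_eval {σ : Type*} (p : MvPolynomial σ ℂ) :
    Measurable fun x : σ → ℂ => MvPolynomial.eval x p := by
  induction p using MvPolynomial.induction_on with
  | C a => simp
  | add p q hp hq => simp; exact hp.add hq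
  | mul_X p s hp => simp; exact hp.mul (measurable_pi_apply s)

lemma my_poly_ae_ne_zero_fin : ∀ (n : ℕ) (p : MvPolynomial (Fin n) ℂ), p ≠ 0 →
    ∀ᵐ x : Fin n → ℂ ∂volume, MvPolynomial.eval x p ≠ 0 := by
  intro n
  induction n with
  | zero =>
    intro p hp
    obtain ⟨a, rfl⟩ := MvPolynomial.C_surjective (Fin 0) p
    have ha : a ≠ 0 := fun h => hp (by simp [h])
    filter_upwards with x
    simpa using ha
  | succ n ih =>
    intro p hp
    set q := MvPolynomial.finSuccEquiv ℂ n p with hqdef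
    have hq0 : q ≠ 0 := fun h =>
      hp ((MvPolynomial.finSuccEquiv ℂ n).injective (by simpa [hqdef] using h))
    have hc0 : q.leadingCoeff ≠ 0 := Polynomial.leadingCoeff_ne_zero.mpr hq0
    have hc := ih _ hc0
    -- the measurable equivalence
    set e := MeasurableEquiv.piFinSuccAbove (fun _ : Fin (n + 1) => ℂ) 0 with hedef
    have hmp : MeasurePreserving e volume volume :=
      volume_preserving_piFinSuccAbove (fun _ : Fin (n + 1) => ℂ) 0
    -- key function
    set F : ℂ × (Fin n → ℂ) → ℂ := fun z => MvPolynomial.eval (Fin.cons z.1 z.2) p with hFdef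
    have hFmeas : Measurable F := by
      apply (my_measurable_eval p).comp
      refine measurable_pi_iff.mpr fun i => ?_
      refine Fin.cases ?_ (fun j => ?_) i
      · simpa using measurable_fst
      · simp; exact (measurable_pi_apply j).comp measurable_snd
    have hFeq : ∀ z : ℂ × (Fin n → ℂ),
        F z = Polynomial.eval z.1 (Polynomial.map (MvPolynomial.eval z.2) q) := by
      intro z
      simpa [hFdef, hqdef] using MvPolynomial.eval_eq_eval_mv_eval' z.2 z.1 p
    have hsymm : ∀ z : ℂ × (Fin n → ℂ), MvPolynomial.eval (e.symm z) p = F z := by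
      intro z
      have : e.symm z = Fin.cons z.1 z.2 := by
        simp [hedef, MeasurableEquiv.piFinSuccAbove_symm_apply, Fin.insertNthEquiv,
          Fin.insertNth_zero']
      rw [this]
    have hmeasS : MeasurableSet {x : Fin (n + 1) → ℂ | MvPolynomial.eval x p ≠ 0} :=
      ((my_measurable_eval p) (measurableSet_singleton 0)).compl
    rw [show (volume : Measure (Fin (n + 1) → ℂ)) = Measure.map e.symm volume from
      (hmp.symm e).map_eq.symm,
      ae_map_iff e.symm.measurable.aemeasurable hmeasS]
    have key : ∀ᵐ z : ℂ × (Fin n → ℂ) ∂volume, F z ≠ 0 := by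
      rw [ae_iff]
      have hB : MeasurableSet {z : ℂ × (Fin n → ℂ) | F z = 0} :=
        hFmeas (measurableSet_singleton 0)
      simp only [not_not]
      rw [Measure.volume_eq_prod, show ((volume : Measure ℂ).prod volume)
            {z : ℂ × (Fin n → ℂ) | F z = 0}
          = ((volume : Measure (Fin n → ℂ)).prod volume)
            (Prod.swap ⁻¹' {z : ℂ × (Fin n → ℂ) | F z = 0}) by
        rw [← Measure.prod_swap, Measure.map_apply measurable_swap hB]]
      rw [Measure.measure_prod_null (measurable_swap hB)]
      filter_upwards [hc] with y hy
      simp only [Pi.zero_apply]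
      have hr : Polynomial.map (MvPolynomial.eval y) q ≠ 0 := by
        intro h
        have h2 := congrArg (fun r => Polynomial.coeff r q.natDegree) h
        simp only [Polynomial.coeff_map, Polynomial.coeff_zero] at h2
        exact hy (by rwa [Polynomial.leadingCoeff])
      have hfin : Set.Finite {x : ℂ | Polynomial.eval x
          (Polynomial.map (MvPolynomial.eval y) q) = 0} :=
        Polynomial.finite_setOf_isRoot hr
      refine measure_mono_null ?_ (hfin.measure_zero volume)
      intro x hx
      have hx' : F (x, y) = 0 := hx
      rw [hFeq (x, y)] at hx'
      exact hx'
    filter_upwards [key] with z hz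
    rw [hsymm z]
    exact hz

lemma my_poly_ae_ne_zero {σ : Type*} [Fintype σ] (p : MvPolynomial σ ℂ) (hp : p ≠ 0) :
    ∀ᵐ x : σ → ℂ ∂volume, MvPolynomial.eval x p ≠ 0 := by
  obtain ⟨f⟩ : Nonempty (Fin (Fintype.card σ) ≃ σ) := ⟨(Fintype.equivFin σ).symm⟩
  have hmp := volume_measurePreserving_piCongrLeft (fun _ : σ => ℂ) f
  have hmeasS : MeasurableSet {x : σ → ℂ | MvPolynomial.eval x p ≠ 0} :=
    ((my_measurable_eval p) (measurableSet_singleton 0)).compl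
  rw [show (volume : Measure (σ → ℂ))
      = Measure.map (MeasurableEquiv.piCongrLeft (fun _ : σ => ℂ) f) volume from hmp.map_eq.symm,
    ae_map_iff (MeasurableEquiv.piCongrLeft (fun _ : σ => ℂ) f).measurable.aemeasurable hmeasS]
  have key := my_poly_ae_ne_zero_fin _ (MvPolynomial.rename f.symm p)
    (fun h => hp ((MvPolynomial.rename_injective _ f.symm.injective) (by simpa using h)))
  filter_upwards [key] with x hx
  have : (MeasurableEquiv.piCongrLeft (fun _ : σ => ℂ) f) x = fun s => x (f.symm s) := by
    funext s
    conv_lhs => rw [← f.apply_symm_apply s]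
    exact Equiv.piCongrLeft_apply_apply (fun _ : σ => ℂ) f x (f.symm s)
  rw [this]
  rwa [MvPolynomial.eval_rename] at hx


lemma my_uncurry_mp (N K : ℕ) :
    MeasurePreserving (fun f : Fin N → Fin K → ℂ => fun p : Fin N × Fin K => f p.1 p.2)
      volume volume := by
  have hmeas : Measurable (fun f : Fin N → Fin K → ℂ => fun p : Fin N × Fin K => f p.1 p.2) :=
    measurable_pi_lambda _ fun p => (measurable_pi_apply p.2).comp (measurable_pi_apply p.1)
  refine ⟨hmeas, ?_⟩
  refine (Measure.pi_eq fun s hs => ?_).symm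
  rw [Measure.map_apply hmeas (MeasurableSet.univ_pi hs)]
  have hpre : (fun f : Fin N → Fin K → ℂ => fun p : Fin N × Fin K => f p.1 p.2) ⁻¹'
      (Set.univ.pi s) = Set.univ.pi fun i => Set.univ.pi fun k => s (i, k) := by
    ext f
    simp [Set.mem_pi, Prod.forall]
  rw [hpre]
  rw [volume_pi_pi]
  have : ∀ i : Fin N, volume (Set.univ.pi fun k => s (i, k))
      = ∏ k : Fin K, volume (s (i, k)) := fun i => volume_pi_pi _
  simp_rw [this]
  exact (Fintype.prod_prod_type fun p : Fin N × Fin K => volume (s p)).symm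


/-- For fixed `E2 : K × M` of full column rank, almost every `N × K` complex matrix `E1`
satisfies `rank (E1 * E2) = min N M`. -/
theorem stmt_0 (N M K : ℕ) (hN : 0 < N) (hM : 0 < M) (hNK : N < K) (hMK : M < K)
    (E2 : Matrix (Fin K) (Fin M) ℂ) (hE2 : E2.rank = M) :
    ∀ᵐ f : Fin N → Fin K → ℂ ∂volume, (Matrix.of f * E2).rank = min N M := by
  classical
  set r := min N M with hrdef
  have hrN : r ≤ N := min_le_left N M
  have hrM : r ≤ M := min_le_right N M
  set ρ : Fin r → Fin N := Fin.castLE hrN with hρdef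
  set γ : Fin r → Fin M := Fin.castLE hrM with hγdef
  -- left inverse of E2
  have hker : LinearMap.ker E2.mulVecLin = ⊥ := by
    have h1 := LinearMap.finrank_range_add_finrank_ker E2.mulVecLin
    have h2 : Module.finrank ℂ (LinearMap.range E2.mulVecLin) = M := hE2
    have h3 : Module.finrank ℂ (Fin M → ℂ) = M := by simp
    rw [h2, h3] at h1
    have h4 : Module.finrank ℂ (LinearMap.ker E2.mulVecLin) = 0 := by omega
    exact Submodule.finrank_eq_zero.mp h4
  obtain ⟨g, hg⟩ := LinearMap.exists_leftInverse_of_injective E2.mulVecLin hker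
  set B := LinearMap.toMatrix' g with hBdef
  have hBE2 : B * E2 = 1 := by
    have h5 : LinearMap.toMatrix' (g.comp E2.mulVecLin)
        = B * LinearMap.toMatrix' E2.mulVecLin := LinearMap.toMatrix'_comp g E2.mulVecLin
    rw [hg, LinearMap.toMatrix'_id] at h5
    have h6 : LinearMap.toMatrix' E2.mulVecLin = E2 := by
      rw [← Matrix.toLin'_apply']
      exact LinearMap.toMatrix'_toLin' E2
    rw [h6] at h5
    exact h5.symm
  -- the witness matrix
  set E1₀ : Fin N → Fin K → ℂ :=
    fun i k => if h : (i : ℕ) < M then B ⟨(i : ℕ), h⟩ k else 0 with hE1₀def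
  -- the polynomial
  set P : MvPolynomial (Fin N × Fin K) ℂ :=
    (Matrix.of fun i j : Fin r =>
      ∑ k : Fin K, MvPolynomial.X (ρ i, k) * MvPolynomial.C (E2 k (γ j))).det with hPdef
  have heval : ∀ x : Fin N × Fin K → ℂ,
      MvPolynomial.eval x P
        = ((Matrix.of (fun i k => x (i, k)) * E2).submatrix ρ γ).det := by
    intro x
    rw [hPdef, RingHom.map_det]
    congr 1
    ext i j
    simp [Matrix.mul_apply, Matrix.map_apply, Matrix.submatrix_apply, map_sum]
  have hP0 : P ≠ 0 := by
    intro h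
    have h7 := heval (fun p : Fin N × Fin K => E1₀ p.1 p.2)
    rw [h] at h7
    have h8 : ((Matrix.of (fun i k => E1₀ i k) * E2).submatrix ρ γ)
        = (1 : Matrix (Fin r) (Fin r) ℂ) := by
      ext i j
      have hiM : ((ρ i : Fin N) : ℕ) < M := lt_of_lt_of_le i.2 hrM
      have : (Matrix.of (fun i k => E1₀ i k) * E2) (ρ i) (γ j)
          = (B * E2) ⟨(i : ℕ), hiM⟩ (γ j) := by
        simp only [Matrix.mul_apply, Matrix.of_apply, hE1₀def]
        refine Finset.sum_congr rfl fun k _ => ?_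
        rw [dif_pos hiM]
        rfl
      rw [Matrix.submatrix_apply, this, hBE2]
      simp only [Matrix.one_apply]
      have hij : ((⟨(i : ℕ), hiM⟩ : Fin M) = γ j) ↔ (i = j) := by
        constructor
        · intro hh
          exact Fin.ext (by simpa [hγdef, Fin.ext_iff] using hh)
        · rintro rfl
          exact Fin.ext (by simp [hγdef])
      simp [hij]
    rw [h8] at h7
    simp at h7
  -- almost everywhere nonvanishing, transported to matrices
  have hae := my_poly_ae_ne_zero P hP0
  have hmp := my_uncurry_mp N K
  have hmeasQ : MeasurableSet {x : Fin N × Fin K → ℂ | MvPolynomial.eval x P ≠ 0} :=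
    ((my_measurable_eval P) (measurableSet_singleton 0)).compl
  have hae2 : ∀ᵐ f : Fin N → Fin K → ℂ ∂volume,
      MvPolynomial.eval (fun p : Fin N × Fin K => f p.1 p.2) P ≠ 0 := by
    have := hmp.map_eq
    rw [← this] at hae
    exact (ae_map_iff hmp.measurable.aemeasurable hmeasQ).mp hae
  filter_upwards [hae2] with f hf
  -- now the deterministic rank computation
  set S := Matrix.of f * E2 with hSdef
  have hdet : (S.submatrix ρ γ).det ≠ 0 := by
    have := heval (fun p : Fin N × Fin K => f p.1 p.2)
    rw [this] at hf
    exact hf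
  have hranksub : (S.submatrix ρ γ).rank = r := by
    rw [Matrix.rank_of_isUnit _ ((Matrix.isUnit_iff_isUnit_det _).mpr
      (isUnit_iff_ne_zero.mpr hdet))]
    simp
  have hfactor : S.submatrix ρ γ
      = ((1 : Matrix (Fin N) (Fin N) ℂ).submatrix ρ (Equiv.refl (Fin N))) * S
        * ((1 : Matrix (Fin M) (Fin M) ℂ).submatrix (Equiv.refl (Fin M)) γ) := by
    rw [Matrix.one_submatrix_mul ρ (Equiv.refl (Fin N)) S]
    rw [Matrix.mul_submatrix_one (Equiv.refl (Fin M)) γ]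
    simp
  have hlow : r ≤ S.rank := by
    calc r = (S.submatrix ρ γ).rank := hranksub.symm
    _ = (((1 : Matrix (Fin N) (Fin N) ℂ).submatrix ρ (Equiv.refl (Fin N))) * S
        * ((1 : Matrix (Fin M) (Fin M) ℂ).submatrix (Equiv.refl (Fin M)) γ)).rank := by
      rw [← hfactor]
    _ ≤ (((1 : Matrix (Fin N) (Fin N) ℂ).submatrix ρ (Equiv.refl (Fin N))) * S).rank :=
      Matrix.rank_mul_le_left _ _
    _ ≤ S.rank := Matrix.rank_mul_le_right _ _
  have hupN : S.rank ≤ N := by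
    calc S.rank ≤ (Matrix.of f).rank := Matrix.rank_mul_le_left _ _
    _ ≤ Fintype.card (Fin N) := Matrix.rank_le_card_height _
    _ = N := by simp
  have hupM : S.rank ≤ M := by
    calc S.rank ≤ E2.rank := Matrix.rank_mul_le_right _ _
    _ = M := hE2
  omega
end

section
/- Let n ≥ 1. For almost every z ∈ ℂⁿ (with respect to Lebesgue measure on ℂⁿ) and for every ε > 0, the set of pairs (p, q) with p ∈ ℤ and q ∈ ℤⁿ, q ≠ 0, satisfying |p + z·q| ≤ (‖q‖∞)^{−(n−1+ε)/2} is finite; that is, the inequality |p + z·q| > (‖q‖∞)^{−(n−1+ε)/2} holds for all such pairs except finitely many. -/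
open MeasureTheory
open scoped ENNReal

/-- Volume of a "tube" intersected with a box: Fubini slice bound. -/
lemma slice_bound (n : ℕ) (R δ : ℝ) (c : ℂ) (q : Fin n → ℤ) (i : Fin n)
    (hqi : q i ≠ 0) :
    volume {z : Fin n → ℂ | (∀ j, ‖z j‖ ≤ R) ∧
        ‖c + ∑ j, z j * (q j : ℂ)‖ ≤ δ}
      ≤ volume (Metric.closedBall (0:ℂ) (δ / |(q i : ℝ)|)) *
        volume (Metric.closedBall (0:ℂ) R) ^ (n - 1) := by
  classical
  set r : ℝ := δ / |(q i : ℝ)| with hr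
  set T : Set (Fin n → ℂ) := {z | (∀ j, ‖z j‖ ≤ R) ∧
        ‖c + ∑ j, z j * (q j : ℂ)‖ ≤ δ} with hT
  set G : Set (Fin n → ℂ) :=
    Set.univ.pi (fun j => if j = i then Metric.closedBall (0:ℂ) r
      else Metric.closedBall 0 R) with hG
  have hsum_meas : Measurable fun z : Fin n → ℂ => c + ∑ j, z j * (q j : ℂ) :=
    measurable_const.add (Finset.measurable_sum _ fun j _ =>
      (measurable_pi_apply j).mul_const _)
  have hTm : MeasurableSet T := by
    have : T = (Set.univ.pi fun _ : Fin n => Metric.closedBall (0:ℂ) R) ∩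
        ((fun z : Fin n → ℂ => ‖c + ∑ j, z j * (q j : ℂ)‖) ⁻¹' Set.Iic δ) := by
      ext z
      simp [hT, Set.mem_pi, Metric.mem_closedBall, Complex.dist_eq, sub_zero,
        ]
    rw [this]
    exact (MeasurableSet.univ_pi fun j => measurableSet_closedBall).inter
      (hsum_meas.norm measurableSet_Iic)
  have hGm : MeasurableSet G :=
    MeasurableSet.univ_pi fun j => by split <;> exact measurableSet_closedBall
  have key : volume T ≤ volume G := by
    rw [← lintegral_indicator_one hTm, ← lintegral_indicator_one hGm, volume_pi]
    refine lintegral_le_of_lmarginal_le {i} (measurable_one.indicator hTm)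
      (measurable_one.indicator hGm) ?_
    intro x
    rw [lmarginal_singleton, lmarginal_singleton]
    simp only
    by_cases hx : ∀ j, j ≠ i → ‖x j‖ ≤ R
    · -- RHS equals volume of the centered ball of radius r
      set t : ℂ := ∑ j ∈ Finset.univ.erase i, x j * (q j : ℂ) with ht
      set cc : ℂ := -((c + t) / (q i : ℂ)) with hcc
      have hqC : (q i : ℂ) ≠ 0 := by exact_mod_cast hqi
      have hGup : ∀ y : ℂ, G.indicator (1 : (Fin n → ℂ) → ℝ≥0∞) (Function.update x i y)
          = (Metric.closedBall (0:ℂ) r).indicator 1 y := by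
        intro y
        by_cases hy : y ∈ Metric.closedBall (0:ℂ) r
        · have hmemG : Function.update x i y ∈ G := by
            intro j _
            by_cases hj : j = i
            · subst hj; simpa using hy
            · rw [Function.update_of_ne hj]
              simp only [if_neg hj]
              simpa [Metric.mem_closedBall, Complex.dist_eq] using hx j hj
          rw [Set.indicator_of_mem hy, Set.indicator_of_mem hmemG]
          rfl
        · rw [Set.indicator_of_notMem hy, Set.indicator_of_notMem]
          intro hmem
          have h := hmem i (Set.mem_univ i)
          rw [Function.update_self] at h
          simp only [if_pos rfl] at h
          exact hy h
      have hTup : ∀ y : ℂ, T.indicator (1 : (Fin n → ℂ) → ℝ≥0∞) (Function.update x i y)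
          ≤ (Metric.closedBall cc r).indicator 1 y := by
        intro y
        by_cases hy : Function.update x i y ∈ T
        · have hball : y ∈ Metric.closedBall cc r := by
            have h2 := hy.2
            have hsum : ∑ j, Function.update x i y j * (q j : ℂ) = t + y * (q i : ℂ) := by
              rw [← Finset.sum_erase_add Finset.univ _ (Finset.mem_univ i)]
              rw [Function.update_self]
              congr 1
              refine Finset.sum_congr rfl fun j hj => ?_
              rw [Function.update_of_ne (Finset.ne_of_mem_erase hj)]
            rw [hsum] at h2
            have habsq : ‖(q i : ℂ)‖ = |(q i : ℝ)| := Complex.norm_intCast _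
            have hq0 : (0:ℝ) < |(q i : ℝ)| := by
              rw [abs_pos]; exact_mod_cast hqi
            rw [Metric.mem_closedBall, Complex.dist_eq]
            have : y - cc = (c + (t + y * (q i : ℂ))) / (q i : ℂ) := by
              rw [hcc]; field_simp; ring
            rw [this, norm_div, habsq, hr]
            exact div_le_div_of_nonneg_right h2 hq0.le
          rw [Set.indicator_of_mem hy, Set.indicator_of_mem hball]
          exact le_refl _
        · rw [Set.indicator_of_notMem hy]
          exact zero_le
      calc ∫⁻ y, T.indicator 1 (Function.update x i y) ∂volume
          ≤ ∫⁻ y, (Metric.closedBall cc r).indicator 1 y ∂volume := lintegral_mono hTup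
        _ = volume (Metric.closedBall cc r) := lintegral_indicator_one measurableSet_closedBall
        _ = volume (Metric.closedBall (0:ℂ) r) := by
            rw [Complex.volume_closedBall, Complex.volume_closedBall]
        _ = ∫⁻ y, (Metric.closedBall (0:ℂ) r).indicator 1 y ∂volume :=
            (lintegral_indicator_one measurableSet_closedBall).symm
        _ = ∫⁻ y, G.indicator 1 (Function.update x i y) ∂volume := by
            refine lintegral_congr fun y => (hGup y).symm
    · -- LHS is zero
      have hz : ∀ y : ℂ, T.indicator (1 : (Fin n → ℂ) → ℝ≥0∞) (Function.update x i y) = 0 := by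
        intro y
        apply Set.indicator_of_notMem
        rintro ⟨h1, -⟩
        exact hx fun j hj => by simpa [Function.update_of_ne hj] using h1 j
      calc ∫⁻ y, T.indicator 1 (Function.update x i y) ∂volume
          = ∫⁻ _ : ℂ, (0:ℝ≥0∞) ∂volume := lintegral_congr hz
        _ = 0 := lintegral_zero
        _ ≤ _ := zero_le
  refine key.trans_eq ?_
  rw [hG, volume_pi_pi, ← Finset.mul_prod_erase Finset.univ _ (Finset.mem_univ i), if_pos rfl]
  congr 1
  rw [Finset.prod_congr rfl fun j hj => by rw [if_neg (Finset.ne_of_mem_erase hj)],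
    Finset.prod_const, Finset.card_erase_of_mem (Finset.mem_univ i), Finset.card_univ,
    Fintype.card_fin]

lemma tsum_pi_prod (g : ℤ → ℝ≥0∞) : ∀ n : ℕ,
    ∑' q : Fin n → ℤ, ∏ j, g (q j) = (∑' m : ℤ, g m) ^ n := by
  intro n
  induction n with
  | zero =>
      simp only [Finset.univ_eq_empty, Finset.prod_empty, pow_zero]
      rw [tsum_eq_single (fun i => i.elim0) fun b' hb' => absurd (Subsingleton.elim _ _) hb']
  | succ n ih =>
      have h := (Fin.consEquiv (fun _ : Fin (n+1) => ℤ)).tsum_eq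
        (fun q : Fin (n+1) → ℤ => ∏ j, g (q j))
      rw [← h]
      have key : ∀ p : ℤ × (Fin n → ℤ),
          (∏ j, g ((Fin.consEquiv (fun _ : Fin (n+1) => ℤ)) p j)) = g p.1 * ∏ j, g (p.2 j) := by
        intro p
        have h1 : ((Fin.consEquiv (fun _ : Fin (n+1) => ℤ)) p) = Fin.cons p.1 p.2 := rfl
        rw [h1]
        rw [Fin.prod_univ_succ]
        simp [Fin.cons_succ]
      calc ∑' p : ℤ × (Fin n → ℤ), ∏ j, g ((Fin.consEquiv (fun _ : Fin (n+1) => ℤ)) p j)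
          = ∑' p : ℤ × (Fin n → ℤ), g p.1 * ∏ j, g (p.2 j) := tsum_congr key
        _ = ∑' (a : ℤ) (b : Fin n → ℤ), g a * ∏ j, g (b j) :=
            ENNReal.tsum_prod (f := fun (a : ℤ) (b : Fin n → ℤ) => g a * ∏ j, g (b j))
        _ = ∑' (a : ℤ), g a * ∑' (b : Fin n → ℤ), ∏ j, g (b j) :=
            tsum_congr fun a => ENNReal.tsum_mul_left
        _ = (∑' m : ℤ, g m) ^ (n + 1) := by
            rw [ih, ENNReal.tsum_mul_right, pow_succ]
            exact mul_comm _ _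

lemma summable_aux {s : ℝ} (hs : 1 < s) :
    ∑' m : ℤ, ENNReal.ofReal (max |(m : ℝ)| 1 ^ (-s)) ≠ ∞ := by
  have hsum : Summable fun m : ℤ => (max |(m : ℝ)| 1) ^ (-s) := by
    have h1 : Summable fun m : ℤ => |(m : ℝ)| ^ (-s) := Real.summable_abs_int_rpow hs
    have h2 : Summable fun m : ℤ => if m = 0 then (1:ℝ) else 0 :=
      (hasSum_single (0 : ℤ) (fun b' hb' => if_neg hb')).summable
    have heq : ∀ m : ℤ, (max |(m : ℝ)| 1) ^ (-s)
        = |(m : ℝ)| ^ (-s) + (if m = 0 then (1:ℝ) else 0) := by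
      intro m
      by_cases hm : m = 0
      · subst hm
        simp [Real.zero_rpow (show (-s) ≠ 0 by linarith), Real.one_rpow]
      · have : (1:ℝ) ≤ |(m:ℝ)| := by
          rw [← Int.cast_abs]; exact_mod_cast Int.one_le_abs hm
        rw [max_eq_left this, if_neg hm, add_zero]
    exact (h1.add h2).congr fun m => (heq m).symm
  have := ENNReal.ofReal_tsum_of_nonneg
    (fun m : ℤ => Real.rpow_nonneg (le_trans zero_le_one (le_max_right _ _)) _) hsum
  rw [← this]
  exact ENNReal.ofReal_ne_top

noncomputable def badSet (n : ℕ) (ε : ℝ) (R : ℕ) (pq : ℤ × (Fin n → ℤ)) : Set (Fin n → ℂ) :=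
  {z | pq.2 ≠ 0 ∧ (∀ j, ‖z j‖ ≤ (R:ℝ)) ∧
    ‖(pq.1 : ℂ) + ∑ i, z i * (pq.2 i : ℂ)‖ ≤
      ((Finset.univ.sup fun i => (pq.2 i).natAbs : ℕ) : ℝ) ^ (-(((n : ℝ) - 1 + ε) / 2))}

lemma core (n : ℕ) (hn : 1 ≤ n) (ε : ℝ) (hε : 0 < ε) (R : ℕ) :
    ∑' pq : ℤ × (Fin n → ℤ), volume (badSet n ε R pq) ≠ ∞ := by
  classical
  have hnR : (0:ℝ) < n := by exact_mod_cast hn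
  set s : ℝ := ((n:ℝ) + ε) / n with hs_def
  have hs1 : 1 < s := by
    rw [hs_def, lt_div_iff₀ hnR]; linarith
  set Qf : (Fin n → ℤ) → ℕ := fun q => Finset.univ.sup fun i => (q i).natAbs with hQf
  set expo : ℝ := -(((n : ℝ) - 1 + ε) / 2) with hexpo
  set C : ℝ≥0∞ := ENNReal.ofReal (2*(n:ℝ)*R + 3) *
      ((NNReal.pi : ℝ≥0∞) * ((ENNReal.ofReal (R:ℝ))^2 * (NNReal.pi : ℝ≥0∞))^(n-1)) with hC
  have hCne : C ≠ ∞ := by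
    rw [hC]
    exact ENNReal.mul_ne_top ENNReal.ofReal_ne_top
      (ENNReal.mul_ne_top ENNReal.coe_ne_top
        (ENNReal.pow_ne_top (ENNReal.mul_ne_top
          (ENNReal.pow_ne_top ENNReal.ofReal_ne_top) ENNReal.coe_ne_top)))
  -- per q bound
  have hperq : ∀ q : Fin n → ℤ,
      ∑' p : ℤ, volume (badSet n ε R (p, q))
        ≤ ENNReal.ofReal (((Qf q : ℝ)) ^ (-((n:ℝ) + ε))) * C := by
    intro q
    by_cases hq : q = 0
    · subst hq
      have : ∀ p : ℤ, volume (badSet n ε R (p, 0)) = 0 := by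
        intro p
        have : badSet n ε R (p, 0) = ∅ := by
          ext z; simp [badSet]
        rw [this, measure_empty]
      simp [this]
    · -- q ≠ 0
      have hne : (Finset.univ : Finset (Fin n)).Nonempty := ⟨⟨0, hn⟩, Finset.mem_univ _⟩
      obtain ⟨i, -, hQi⟩ := Finset.exists_mem_eq_sup Finset.univ hne fun i => (q i).natAbs
      set Q : ℕ := Qf q with hQdef
      have hQi' : Q = (q i).natAbs := hQi
      obtain ⟨j, hj⟩ := Function.ne_iff.mp hq
      have hQ1 : 1 ≤ Q := le_trans (Int.natAbs_pos.mpr hj)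
        (Finset.le_sup (f := fun i => (q i).natAbs) (Finset.mem_univ j))
      have hqi : q i ≠ 0 := by
        intro h
        rw [h] at hQi'
        simp at hQi'
        omega
      have hQpos : (0:ℝ) < Q := by exact_mod_cast hQ1
      have hQ1R : (1:ℝ) ≤ Q := by exact_mod_cast hQ1
      set δ : ℝ := (Q:ℝ) ^ expo with hδdef
      have hδ0 : 0 ≤ δ := Real.rpow_nonneg hQpos.le _
      have hδ1 : δ ≤ 1 := by
        apply Real.rpow_le_one_of_one_le_of_nonpos hQ1R
        rw [hexpo]
        have : (0:ℝ) ≤ (n:ℝ) - 1 + ε := by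
          have : (1:ℝ) ≤ n := by exact_mod_cast hn
          linarith
        linarith
      set M : ℤ := n * R * Q + 1 with hM
      -- vanishing outside Icc
      have hvanish : ∀ p : ℤ, p ∉ Finset.Icc (-M) M → volume (badSet n ε R (p, q)) = 0 := by
        intro p hp
        convert measure_empty (μ := (volume : Measure (Fin n → ℂ)))
        ext z
        simp only [Set.mem_empty_iff_false, iff_false]
        intro hz
        apply hp
        obtain ⟨-, hbox, hineq⟩ := hz
        have hw : ‖∑ k, z k * (q k : ℂ)‖ ≤ (n:ℝ) * R * Q := by
          calc ‖∑ k, z k * (q k : ℂ)‖ ≤ ∑ k, ‖z k * (q k : ℂ)‖ :=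
                norm_sum_le _ _
            _ ≤ ∑ _k : Fin n, (R:ℝ) * Q := by
                apply Finset.sum_le_sum
                intro k _
                rw [norm_mul]
                have h1 : ‖z k‖ ≤ R := hbox k
                have h2 : ‖((q k : ℤ) : ℂ)‖ ≤ Q := by
                  rw [Complex.norm_intCast, ← Int.cast_abs, ← Nat.cast_natAbs]
                  exact_mod_cast Finset.le_sup (f := fun i => (q i).natAbs) (Finset.mem_univ k)
                exact mul_le_mul h1 h2 (norm_nonneg _) ((Nat.cast_nonneg R))
            _ = (n:ℝ) * R * Q := by
                rw [Finset.sum_const, Finset.card_univ, Fintype.card_fin, nsmul_eq_mul]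
                ring
        have hpabs : |(p:ℝ)| ≤ (n:ℝ) * R * Q + 1 := by
          have h1 : ‖(p:ℂ)‖ ≤ ‖(p:ℂ) + ∑ k, z k * (q k : ℂ)‖
              + ‖∑ k, z k * (q k : ℂ)‖ := by
            have heq : (p:ℂ) = ((p:ℂ) + ∑ k, z k * (q k : ℂ)) + (-∑ k, z k * (q k : ℂ)) := by
              ring
            conv_lhs => rw [heq]
            refine le_trans (norm_add_le _ _) ?_
            rw [norm_neg]
          have h2 : ‖(p:ℂ)‖ = |(p:ℝ)| := Complex.norm_intCast p
          rw [h2] at h1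
          calc |(p:ℝ)| ≤ δ + (n:ℝ) * R * Q := by
                refine h1.trans (add_le_add ?_ hw)
                exact hineq
            _ ≤ (n:ℝ) * R * Q + 1 := by linarith
        rw [Finset.mem_Icc, ← abs_le]
        have : ((|p| : ℤ) : ℝ) ≤ ((M : ℤ) : ℝ) := by
          rw [Int.cast_abs, hM]
          push_cast
          linarith
        exact_mod_cast this
      -- per p bound
      have hper : ∀ p : ℤ, volume (badSet n ε R (p, q)) ≤
          (ENNReal.ofReal ((δ / Q)^2) * NNReal.pi) *
            ((ENNReal.ofReal (R:ℝ))^2 * NNReal.pi)^(n-1) := by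
        intro p
        have hsub : badSet n ε R (p, q) ⊆ {z : Fin n → ℂ | (∀ j, ‖z j‖ ≤ (R:ℝ)) ∧
            ‖(p:ℂ) + ∑ j, z j * (q j : ℂ)‖ ≤ δ} := fun z hz => ⟨hz.2.1, hz.2.2⟩
        refine (measure_mono hsub).trans ?_
        refine (slice_bound n R δ (p:ℂ) q i hqi).trans ?_
        have habs : |(q i : ℝ)| = (Q:ℝ) := by
          rw [← Int.cast_abs]
          rw [hQi']
          exact_mod_cast (Nat.cast_natAbs (α := ℝ) (q i)).symm
        rw [habs, Complex.volume_closedBall, Complex.volume_closedBall,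
          ENNReal.ofReal_pow (by positivity)]
      -- sum over p
      calc ∑' p : ℤ, volume (badSet n ε R (p, q))
          = ∑ p ∈ Finset.Icc (-M) M, volume (badSet n ε R (p, q)) := tsum_eq_sum hvanish
        _ ≤ (Finset.Icc (-M) M).card •
              ((ENNReal.ofReal ((δ / Q)^2) * NNReal.pi) *
                ((ENNReal.ofReal (R:ℝ))^2 * NNReal.pi)^(n-1)) :=
            Finset.sum_le_card_nsmul _ _ _ fun p _ => hper p
        _ ≤ ENNReal.ofReal (((Qf q : ℝ)) ^ (-((n:ℝ) + ε))) * C := by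
            rw [nsmul_eq_mul]
            have hcardR : ((Finset.Icc (-M) M).card : ℝ) = 2*(n:ℝ)*R*Q + 3 := by
              rw [Int.card_Icc]
              have h2 : M + 1 - -M = 2*M + 1 := by ring
              rw [h2]
              have h3 : (0:ℤ) ≤ 2*M + 1 := by
                rw [hM]; positivity
              have h4 := Int.toNat_of_nonneg h3
              have h5 : (((2*M+1).toNat : ℤ) : ℝ) = ((2*M+1 : ℤ) : ℝ) := by rw [h4]
              push_cast at h5 ⊢
              rw [h5, hM]
              push_cast
              ring
            have hcard : ((Finset.Icc (-M) M).card : ℝ≥0∞)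
                ≤ ENNReal.ofReal ((2*(n:ℝ)*R + 3) * Q) := by
              rw [← ENNReal.ofReal_natCast, hcardR]
              apply ENNReal.ofReal_le_ofReal
              nlinarith [hQ1R, Nat.cast_nonneg (α := ℝ) n, Nat.cast_nonneg (α := ℝ) R]
            have hreal : ((2*(n:ℝ)*R + 3) * Q) * (δ / Q)^2
                = ((Qf q : ℝ) ^ (-((n:ℝ) + ε))) * (2*(n:ℝ)*R + 3) := by
              have hδ2 : δ^2 = (Q:ℝ) ^ (expo * 2) := by
                rw [hδdef, ← Real.rpow_natCast ((Q:ℝ)^expo) 2, ← Real.rpow_mul hQpos.le]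
                norm_num
              have hQne : (Q:ℝ) ≠ 0 := hQpos.ne'
              have key : (Q:ℝ) * (δ / Q)^2 = (Q:ℝ) ^ (expo * 2 - 1) := by
                rw [div_pow, hδ2, Real.rpow_sub hQpos, Real.rpow_one]
                field_simp
              have hexpo2 : expo * 2 - 1 = -((n:ℝ) + ε) := by
                rw [hexpo]; ring
              calc ((2*(n:ℝ)*R + 3) * Q) * (δ / Q)^2
                  = (2*(n:ℝ)*R + 3) * ((Q:ℝ) * (δ / Q)^2) := by ring
                _ = (2*(n:ℝ)*R + 3) * ((Q:ℝ) ^ (expo * 2 - 1)) := by rw [key]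
                _ = ((Qf q : ℝ) ^ (-((n:ℝ) + ε))) * (2*(n:ℝ)*R + 3) := by
                    rw [hexpo2, ← hQdef]; ring
            have heq : ENNReal.ofReal ((2*(n:ℝ)*R + 3) * Q) *
                  ((ENNReal.ofReal ((δ / Q)^2) * NNReal.pi) *
                    ((ENNReal.ofReal (R:ℝ))^2 * NNReal.pi)^(n-1))
                = ENNReal.ofReal (((Qf q : ℝ)) ^ (-((n:ℝ) + ε))) * C := by
              calc ENNReal.ofReal ((2*(n:ℝ)*R + 3) * Q) *
                    ((ENNReal.ofReal ((δ / Q)^2) * NNReal.pi) *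
                      ((ENNReal.ofReal (R:ℝ))^2 * NNReal.pi)^(n-1))
                  = (ENNReal.ofReal ((2*(n:ℝ)*R + 3) * Q) * ENNReal.ofReal ((δ / Q)^2)) *
                    ((NNReal.pi : ℝ≥0∞) * ((ENNReal.ofReal (R:ℝ))^2 * NNReal.pi)^(n-1)) := by
                    ring
                _ = ENNReal.ofReal (((2*(n:ℝ)*R + 3) * Q) * (δ / Q)^2) *
                    ((NNReal.pi : ℝ≥0∞) * ((ENNReal.ofReal (R:ℝ))^2 * NNReal.pi)^(n-1)) := by
                    rw [← ENNReal.ofReal_mul (by positivity)]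
                _ = ENNReal.ofReal (((Qf q : ℝ) ^ (-((n:ℝ) + ε))) * (2*(n:ℝ)*R + 3)) *
                    ((NNReal.pi : ℝ≥0∞) * ((ENNReal.ofReal (R:ℝ))^2 * NNReal.pi)^(n-1)) := by
                    rw [hreal]
                _ = ENNReal.ofReal (((Qf q : ℝ)) ^ (-((n:ℝ) + ε))) * C := by
                    rw [ENNReal.ofReal_mul (Real.rpow_nonneg (Nat.cast_nonneg _) _), hC]
                    ring
            exact le_trans (mul_le_mul_left hcard _) (le_of_eq heq)
  -- now sum over q
  have hsplit : ∑' pq : ℤ × (Fin n → ℤ), volume (badSet n ε R pq)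
      = ∑' q : Fin n → ℤ, ∑' p : ℤ, volume (badSet n ε R (p, q)) := by
    rw [ENNReal.tsum_prod (f := fun p q => volume (badSet n ε R (p, q)))]
    exact ENNReal.tsum_comm
  rw [hsplit]
  -- bound of Q-power by product
  have hW : ∀ q : Fin n → ℤ, ENNReal.ofReal (((Qf q : ℝ)) ^ (-((n:ℝ) + ε)))
      ≤ ∏ j, ENNReal.ofReal ((max |(q j : ℝ)| 1) ^ (-s)) := by
    intro q
    rcases Nat.eq_zero_or_pos (Qf q) with hQ0 | hQ1
    · rw [hQ0]
      simp only [Nat.cast_zero]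
      rw [Real.zero_rpow (show -((n:ℝ) + ε) ≠ 0 by
        have h : (0:ℝ) < (n:ℝ) + ε := by positivity
        linarith)]
      simp
    · have hQ1R : (1:ℝ) ≤ (Qf q : ℝ) := by exact_mod_cast hQ1
      have hQpos : (0:ℝ) < (Qf q : ℝ) := by linarith
      have hfac : ∀ j, max |(q j : ℝ)| 1 ≤ (Qf q : ℝ) := by
        intro j
        apply max_le _ hQ1R
        rw [← Int.cast_abs, ← Nat.cast_natAbs]
        exact_mod_cast Finset.le_sup (f := fun i => (q i).natAbs) (Finset.mem_univ j)
      have hs0 : 0 ≤ s := by positivity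
      have hprod : ∏ j : Fin n, (max |(q j : ℝ)| 1) ^ s ≤ (Qf q : ℝ) ^ ((n:ℝ) + ε) := by
        calc ∏ j : Fin n, (max |(q j : ℝ)| 1) ^ s
            ≤ ∏ _j : Fin n, (Qf q : ℝ) ^ s := by
              apply Finset.prod_le_prod
              · intro j _; positivity
              · intro j _
                exact Real.rpow_le_rpow (by positivity) (hfac j) hs0
          _ = ((Qf q : ℝ) ^ s) ^ (n : ℕ) := by
              rw [Finset.prod_const, Finset.card_univ, Fintype.card_fin]
          _ = (Qf q : ℝ) ^ (s * n) := by
              rw [← Real.rpow_natCast ((Qf q : ℝ) ^ s) n, ← Real.rpow_mul hQpos.le]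
          _ = (Qf q : ℝ) ^ ((n:ℝ) + ε) := by
              congr 1
              rw [hs_def]
              field_simp
      have hreal : ((Qf q : ℝ)) ^ (-((n:ℝ) + ε)) ≤ ∏ j : Fin n, (max |(q j : ℝ)| 1) ^ (-s) := by
        have hpos : (0:ℝ) < ∏ j : Fin n, (max |(q j : ℝ)| 1) ^ s := by
          apply Finset.prod_pos
          intro j _
          exact Real.rpow_pos_of_pos (by positivity) _
        calc ((Qf q : ℝ)) ^ (-((n:ℝ) + ε)) = ((Qf q : ℝ) ^ ((n:ℝ) + ε))⁻¹ :=
              Real.rpow_neg hQpos.le _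
          _ ≤ (∏ j : Fin n, (max |(q j : ℝ)| 1) ^ s)⁻¹ := by
              exact inv_anti₀ hpos hprod
          _ = ∏ j : Fin n, (max |(q j : ℝ)| 1) ^ (-s) := by
              rw [← Finset.prod_inv_distrib]
              exact Finset.prod_congr rfl fun j _ => (Real.rpow_neg (by positivity) _).symm
      calc ENNReal.ofReal (((Qf q : ℝ)) ^ (-((n:ℝ) + ε)))
          ≤ ENNReal.ofReal (∏ j : Fin n, (max |(q j : ℝ)| 1) ^ (-s)) :=
            ENNReal.ofReal_le_ofReal hreal
        _ = ∏ j, ENNReal.ofReal ((max |(q j : ℝ)| 1) ^ (-s)) :=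
            ENNReal.ofReal_prod_of_nonneg fun j _ => by positivity
  -- conclude
  have htot : ∑' q : Fin n → ℤ, ∑' p : ℤ, volume (badSet n ε R (p, q))
      ≤ (∑' m : ℤ, ENNReal.ofReal ((max |(m : ℝ)| 1) ^ (-s))) ^ n * C := by
    calc ∑' q : Fin n → ℤ, ∑' p : ℤ, volume (badSet n ε R (p, q))
        ≤ ∑' q : Fin n → ℤ, (∏ j, ENNReal.ofReal ((max |(q j : ℝ)| 1) ^ (-s))) * C := by
          exact ENNReal.tsum_le_tsum fun q => le_trans (hperq q) (mul_le_mul_left (hW q) C)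
      _ = (∑' q : Fin n → ℤ, ∏ j, ENNReal.ofReal ((max |(q j : ℝ)| 1) ^ (-s))) * C :=
          ENNReal.tsum_mul_right
      _ = (∑' m : ℤ, ENNReal.ofReal ((max |(m : ℝ)| 1) ^ (-s))) ^ n * C := by
          rw [tsum_pi_prod (fun m => ENNReal.ofReal ((max |(m : ℝ)| 1) ^ (-s))) n]
  exact ne_top_of_le_ne_top
    (ENNReal.mul_ne_top (ENNReal.pow_ne_top (summable_aux hs1)) hCne) htot

/-- For almost every `z ∈ ℂⁿ` and every `ε > 0`, only finitely many pairs
`(p, q) ∈ ℤ × ℤⁿ` with `q ≠ 0` satisfy `|p + z·q| ≤ ‖q‖∞ ^ (-(n - 1 + ε)/2)`. -/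
theorem stmt_5 (n : ℕ) (hn : 1 ≤ n) :
    ∀ᵐ z : Fin n → ℂ ∂volume, ∀ ε : ℝ, 0 < ε →
      {pq : ℤ × (Fin n → ℤ) | pq.2 ≠ 0 ∧
        ‖(pq.1 : ℂ) + ∑ i, z i * (pq.2 i : ℂ)‖ ≤
          ((Finset.univ.sup fun i => (pq.2 i).natAbs : ℕ) : ℝ) ^
            (-(((n : ℝ) - 1 + ε) / 2))}.Finite := by
  have hae : ∀ᵐ z : Fin n → ℂ ∂volume, ∀ k : ℕ, ∀ R : ℕ,
      {pq : ℤ × (Fin n → ℤ) | z ∈ badSet n (1/(k+1)) R pq}.Finite := by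
    rw [ae_all_iff]
    intro k
    rw [ae_all_iff]
    intro R
    exact ae_finite_setOf_mem (core n hn (1/(k+1)) (by positivity) R)
  filter_upwards [hae] with z hz ε hε
  obtain ⟨k, hk⟩ := exists_nat_one_div_lt hε
  set R : ℕ := ⌈∑ j, ‖z j‖⌉₊ with hR
  have hbox : ∀ j, ‖z j‖ ≤ (R:ℝ) := by
    intro j
    refine le_trans ?_ (Nat.le_ceil _)
    exact Finset.single_le_sum (f := fun j => ‖z j‖)
      (fun j _ => norm_nonneg _) (Finset.mem_univ j)
  refine (hz k R).subset ?_
  rintro ⟨p, q⟩ ⟨hq, hineq⟩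
  refine ⟨hq, hbox, ?_⟩
  refine hineq.trans ?_
  have hQ1 : (1:ℝ) ≤ ((Finset.univ.sup fun i => (q i).natAbs : ℕ) : ℝ) := by
    obtain ⟨j, hj⟩ := Function.ne_iff.mp hq
    exact_mod_cast le_trans (Int.natAbs_pos.mpr hj)
      (Finset.le_sup (f := fun i => (q i).natAbs) (Finset.mem_univ j))
  apply Real.rpow_le_rpow_of_exponent_le hQ1
  have hkε : (1:ℝ)/(k+1) ≤ ε := le_of_lt hk
  have h2 : (0:ℝ) < 2 := by norm_num
  rw [neg_le_neg_iff, div_le_div_iff_of_pos_right h2]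
  linarith
end

section
/- Let n ≥ 1. For almost every z ∈ ℂⁿ (with respect to Lebesgue measure on ℂⁿ) and for every ε > 0, there exists a constant κ > 0 such that for all p ∈ ℤ and all q ∈ ℤⁿ with q ≠ 0, |p + z·q| > κ·(‖q‖∞)^{−(n−1+ε)/2}. -/
open MeasureTheory

open Metric
open scoped ENNReal NNReal

lemma aux_summable_one (u : ℝ) (hu : 1 < u) :
    ∑' m : ℤ, ((1 + m.natAbs : ℕ) : ℝ≥0∞) ^ (-u) ≠ ⊤ := by
  have hnat : Summable (fun k : ℕ => ((1 : ℝ) + k) ^ (-u)) := by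
    have h0 : Summable (fun k : ℕ => (k : ℝ) ^ (-u)) :=
      Real.summable_nat_rpow.2 (by linarith)
    have := (summable_nat_add_iff 1).2 h0
    apply this.congr
    intro k
    push_cast
    ring_nf
  have hsum : Summable (fun m : ℤ => ((1 : ℝ) + |(m : ℝ)|) ^ (-u)) := by
    rw [summable_int_iff_summable_nat_and_neg]
    constructor <;> · apply hnat.congr; intro k; push_cast; simp [abs_of_nonneg]
  have heq : ∀ m : ℤ, ((1 + m.natAbs : ℕ) : ℝ≥0∞) ^ (-u)
      = ENNReal.ofReal (((1 : ℝ) + |(m : ℝ)|) ^ (-u)) := by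
    intro m
    rw [← ENNReal.ofReal_rpow_of_pos (by positivity), ← ENNReal.ofReal_natCast]
    congr 2
    push_cast [Nat.cast_natAbs]
    ring
  simp_rw [heq]
  rw [← ENNReal.ofReal_tsum_of_nonneg (fun m => by positivity) hsum]
  exact ENNReal.ofReal_ne_top

lemma aux_tsum_pi (g : ℤ → ℝ≥0∞) : ∀ k : ℕ, ∑' q : Fin k → ℤ, ∏ i, g (q i) = (∑' m, g m) ^ k := by
  intro k
  induction k with
  | zero =>
      rw [pow_zero]
      rw [tsum_eq_single (fun _ => 0) (by intro b hb; exact absurd (Subsingleton.elim b _) hb)]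
      simp
  | succ k ih =>
      have key : ∀ (a : ℤ) (b : Fin k → ℤ), (∏ i, g ((Fin.cons a b : Fin (k+1) → ℤ) i)) = g a * ∏ i, g (b i) := by
        intro a b
        calc ∏ i, g ((Fin.cons a b : Fin (k+1) → ℤ) i) = ∏ i, (Fin.cons (g a) (g ∘ b) : Fin (k+1) → ℝ≥0∞) i := by
              rw [← Fin.comp_cons]; rfl
        _ = g a * ∏ i, (g ∘ b) i := Fin.prod_cons _ _
        _ = _ := rfl
      rw [← (Fin.consEquiv (fun _ : Fin (k+1) => ℤ)).tsum_eq]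
      have : (fun c : ℤ × (Fin k → ℤ) => ∏ i, g ((Fin.consEquiv (fun _ : Fin (k+1) => ℤ)) c i))
          = fun c => g c.1 * ∏ i, g (c.2 i) := funext fun c => key c.1 c.2
      rw [this, ENNReal.tsum_prod']
      calc ∑' (a : ℤ), ∑' (b : Fin k → ℤ), g (a, b).1 * ∏ i, g ((a, b).2 i)
          = ∑' (a : ℤ), g a * (∑' m, g m) ^ k := by
            congr 1; funext a; simp only []; rw [show (fun b : Fin k → ℤ => g (a, b).1 * ∏ i, g ((a, b).2 i)) = fun b => g a * ∏ i, g (b i) from rfl, ENNReal.tsum_mul_left, ih]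
        _ = (∑' m, g m) * (∑' m, g m) ^ k := ENNReal.tsum_mul_right
        _ = (∑' m, g m) ^ (k + 1) := (pow_succ' _ _).symm

lemma aux_lattice (n : ℕ) (hn : 1 ≤ n) (t : ℝ) (ht : (n : ℝ) < t) :
    ∑' q : Fin n → ℤ,
      (if q = 0 then 0 else ((Finset.univ.sup fun i => (q i).natAbs : ℕ) : ℝ≥0∞) ^ (-t)) ≠ ⊤ := by
  have hn0 : (0:ℝ) < n := by exact_mod_cast Nat.lt_of_lt_of_le Nat.zero_lt_one hn
  set u := t / n with hu
  have hu1 : 1 < u := (one_lt_div hn0).2 ht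
  have hun : u * n = t := by rw [hu]; exact div_mul_cancel₀ t hn0.ne'
  have hbound : ∀ q : Fin n → ℤ,
      (if q = 0 then 0 else ((Finset.univ.sup fun i => (q i).natAbs : ℕ) : ℝ≥0∞) ^ (-t))
      ≤ (2:ℝ≥0∞) ^ t * ∏ i, ((1 + (q i).natAbs : ℕ) : ℝ≥0∞) ^ (-u) := by
    intro q
    by_cases hq : q = 0
    · simp [hq]
    · rw [if_neg hq]
      set N : ℕ := Finset.univ.sup fun i => (q i).natAbs with hN
      have hN1 : 1 ≤ N := by
        obtain ⟨i, hi⟩ := Function.ne_iff.1 hq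
        calc 1 ≤ (q i).natAbs := Int.natAbs_pos.2 hi
          _ ≤ N := Finset.le_sup (f := fun i => (q i).natAbs) (Finset.mem_univ i)
      have step1 : ∀ i, ((2 * N : ℕ) : ℝ≥0∞) ^ (-u) ≤ ((1 + (q i).natAbs : ℕ) : ℝ≥0∞) ^ (-u) := by
        intro i
        rw [ENNReal.rpow_neg, ENNReal.rpow_neg]
        apply ENNReal.inv_le_inv.2
        apply ENNReal.rpow_le_rpow _ (le_of_lt (lt_trans zero_lt_one hu1))
        have h1 : (q i).natAbs ≤ N :=
          Finset.le_sup (f := fun i => (q i).natAbs) (Finset.mem_univ i)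
        have h2 : (1 + (q i).natAbs : ℕ) ≤ 2 * N := by omega
        exact_mod_cast h2
      have step2 : (((2 * N : ℕ) : ℝ≥0∞) ^ (-u)) ^ n = ((2 * N : ℕ) : ℝ≥0∞) ^ (-t) := by
        rw [← ENNReal.rpow_natCast (((2 * N : ℕ) : ℝ≥0∞) ^ (-u)) n, ← ENNReal.rpow_mul]
        congr 1
        rw [← hun]; ring
      have step3 : ((2 * N : ℕ) : ℝ≥0∞) ^ (-t) = (2:ℝ≥0∞) ^ (-t) * (N : ℝ≥0∞) ^ (-t) := by
        push_cast
        exact ENNReal.mul_rpow_of_ne_top (by norm_num) (ENNReal.natCast_ne_top N) (-t)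
      calc (N : ℝ≥0∞) ^ (-t) = (2:ℝ≥0∞) ^ t * ((2:ℝ≥0∞) ^ (-t) * (N : ℝ≥0∞) ^ (-t)) := by
            rw [← mul_assoc, ← ENNReal.rpow_add t (-t) (by norm_num) (by norm_num)]
            simp
        _ = (2:ℝ≥0∞) ^ t * (((2 * N : ℕ) : ℝ≥0∞) ^ (-u)) ^ n := by rw [step2, step3]
        _ = (2:ℝ≥0∞) ^ t * ∏ _i : Fin n, ((2 * N : ℕ) : ℝ≥0∞) ^ (-u) := by
            rw [Finset.prod_const, Finset.card_univ, Fintype.card_fin]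
        _ ≤ (2:ℝ≥0∞) ^ t * ∏ i, ((1 + (q i).natAbs : ℕ) : ℝ≥0∞) ^ (-u) := by
            apply mul_le_mul_right (Finset.prod_le_prod' fun i _ => step1 i)
  refine ne_top_of_le_ne_top ?_ (ENNReal.tsum_le_tsum hbound)
  rw [ENNReal.tsum_mul_left, aux_tsum_pi (fun m => ((1 + m.natAbs : ℕ) : ℝ≥0∞) ^ (-u)) n]
  exact ENNReal.mul_ne_top (by simp [ENNReal.rpow_eq_top_iff]) (ENNReal.pow_ne_top (aux_summable_one u hu1))

lemma aux_vol_bound (m : ℕ) (q : Fin (m+1) → ℤ) (hq : q ≠ 0) (p : ℤ) (r : ℝ) (R : ℕ) :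
    volume ({z : Fin (m+1) → ℂ | ‖(p:ℂ) + ∑ i, z i * (q i:ℂ)‖ ≤ r}
        ∩ Metric.closedBall 0 (R:ℝ))
      ≤ ENNReal.ofReal (r / ((Finset.univ.sup fun i => (q i).natAbs : ℕ) : ℝ)) ^ 2 * NNReal.pi *
        volume (Metric.closedBall (0 : Fin m → ℂ) (R:ℝ)) := by
  set N : ℕ := Finset.univ.sup fun i => (q i).natAbs with hN
  obtain ⟨i₀, -, hi₀⟩ := Finset.exists_mem_eq_sup Finset.univ Finset.univ_nonempty
    (fun i => (q i).natAbs)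
  have hN1 : 1 ≤ N := by
    obtain ⟨i, hi⟩ := Function.ne_iff.1 hq
    calc 1 ≤ (q i).natAbs := Int.natAbs_pos.2 hi
      _ ≤ N := Finset.le_sup (f := fun i => (q i).natAbs) (Finset.mem_univ i)
  set d : ℂ := ((q i₀ : ℤ) : ℂ) with hdd
  have hd : ‖d‖ = (N : ℝ) := by
    rw [hdd, Complex.norm_intCast, hN, hi₀]
    simp [Nat.cast_natAbs]
  have hd0 : 0 < ‖d‖ := by
    rw [hd]; exact_mod_cast Nat.lt_of_lt_of_le Nat.zero_lt_one hN1
  set c : (Fin m → ℂ) → ℂ := fun y => ∑ j, y j * ((q (i₀.succAbove j) : ℤ) : ℂ) with hc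
  set T : Set (ℂ × (Fin m → ℂ)) :=
    {w | ‖(p:ℂ) + (w.1 * d + c w.2)‖ ≤ r} ∩ {w | ‖w.2‖ ≤ (R:ℝ)} with hT
  have hTm : MeasurableSet T := by
    apply IsClosed.measurableSet
    apply IsClosed.inter
    · exact isClosed_le (continuous_norm.comp (by fun_prop)) continuous_const
    · exact isClosed_le (continuous_norm.comp continuous_snd) continuous_const
  set e := MeasurableEquiv.piFinSuccAbove (fun _ : Fin (m+1) => ℂ) i₀ with he
  have hsub : {z : Fin (m+1) → ℂ | ‖(p:ℂ) + ∑ i, z i * (q i:ℂ)‖ ≤ r}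
        ∩ Metric.closedBall 0 (R:ℝ) ⊆ e ⁻¹' T := by
    rintro z ⟨h1, h2⟩
    have hz : e z = (z i₀, fun j => z (i₀.succAbove j)) := rfl
    constructor
    · show ‖(p:ℂ) + ((e z).1 * d + c (e z).2)‖ ≤ r
      rw [hz]
      have := Fin.sum_univ_succAbove (fun i => z i * ((q i : ℤ) : ℂ)) i₀
      simp only [Set.mem_setOf_eq] at h1
      rw [this] at h1
      exact h1
    · show ‖(e z).2‖ ≤ (R:ℝ)
      rw [hz]
      rw [pi_norm_le_iff_of_nonneg (Nat.cast_nonneg R)]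
      intro j
      exact le_trans (norm_le_pi_norm z _) (mem_closedBall_zero_iff.1 h2)
  have hslice : ∀ y : Fin m → ℂ,
      volume ((fun x => (x, y)) ⁻¹' T) ≤
        (Metric.closedBall (0 : Fin m → ℂ) (R:ℝ)).indicator
          (fun _ => ENNReal.ofReal (r / (N:ℝ)) ^ 2 * NNReal.pi) y := by
    intro y
    by_cases hy : y ∈ Metric.closedBall (0 : Fin m → ℂ) (R:ℝ)
    · rw [Set.indicator_of_mem hy]
      have hset : (fun x => (x, y)) ⁻¹' T
          = Metric.closedBall (-(((p:ℂ) + c y)) / d) (r / ‖d‖) := by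
        ext x
        simp only [hT, Set.mem_preimage, Set.mem_inter_iff, Set.mem_setOf_eq,
          Metric.mem_closedBall, Complex.dist_eq]
        have hdne : d ≠ 0 := by
          intro h; rw [h] at hd0; simp at hd0
        have hrw : (p:ℂ) + (x * d + c y) = d * (x - (-(((p:ℂ) + c y)) / d)) := by
          field_simp
          ring
        rw [hrw, norm_mul]
        constructor
        · rintro ⟨h, -⟩
          rw [le_div_iff₀ hd0, mul_comm]
          exact h
        · intro h
          refine ⟨?_, mem_closedBall_zero_iff.1 hy⟩
          rw [mul_comm]
          exact (le_div_iff₀ hd0).1 h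
      rw [hset, Complex.volume_closedBall, hd]
    · rw [Set.indicator_of_notMem hy]
      have hset : (fun x => (x, y)) ⁻¹' T = ∅ := by
        apply Set.eq_empty_iff_forall_notMem.2
        rintro x ⟨-, h2⟩
        exact hy (mem_closedBall_zero_iff.2 h2)
      rw [hset, measure_empty]
  calc volume ({z : Fin (m+1) → ℂ | ‖(p:ℂ) + ∑ i, z i * (q i:ℂ)‖ ≤ r}
        ∩ Metric.closedBall 0 (R:ℝ))
      ≤ volume (e ⁻¹' T) := measure_mono hsub
    _ = ((volume : Measure ℂ).prod (Measure.pi fun _ : Fin m => (volume : Measure ℂ))) T := by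
        rw [volume_pi]
        exact (measurePreserving_piFinSuccAbove (fun _ : Fin (m+1) => (volume : Measure ℂ))
          i₀).measure_preimage hTm.nullMeasurableSet
    _ = ∫⁻ y, volume ((fun x => (x, y)) ⁻¹' T) ∂(Measure.pi fun _ : Fin m => (volume : Measure ℂ)) :=
        Measure.prod_apply_symm hTm
    _ ≤ ∫⁻ y, (Metric.closedBall (0 : Fin m → ℂ) (R:ℝ)).indicator
          (fun _ => ENNReal.ofReal (r / (N:ℝ)) ^ 2 * NNReal.pi) y
          ∂(Measure.pi fun _ : Fin m => (volume : Measure ℂ)) := lintegral_mono hslice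
    _ = ENNReal.ofReal (r / (N:ℝ)) ^ 2 * NNReal.pi *
        volume (Metric.closedBall (0 : Fin m → ℂ) (R:ℝ)) := by
        rw [lintegral_indicator_const measurableSet_closedBall, ← volume_pi]

lemma aux_key (m : ℕ) (ε : ℝ) (hε : 0 < ε) :
    ∀ᵐ z : Fin (m+1) → ℂ ∂volume, ∃ κ : ℝ, 0 < κ ∧
      ∀ (p : ℤ) (q : Fin (m+1) → ℤ), q ≠ 0 →
        κ * ((Finset.univ.sup fun i => (q i).natAbs : ℕ) : ℝ) ^ (-(((m:ℝ) + ε) / 2)) <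
          ‖(p : ℂ) + ∑ i, z i * (q i : ℂ)‖ := by
  set s : ℝ := ((m:ℝ) + ε) / 2 with hs
  have hs0 : 0 < s := by positivity
  set Nf : (Fin (m+1) → ℤ) → ℕ := fun q => Finset.univ.sup fun i => (q i).natAbs with hNf
  set A : ℝ → (Fin (m+1) → ℤ) × ℤ → Set (Fin (m+1) → ℂ) := fun δ c =>
    if c.1 = 0 then ∅ else
      {z | ‖(c.2:ℂ) + ∑ i, z i * (c.1 i:ℂ)‖ ≤ δ * (Nf c.1 : ℝ) ^ (-s)} with hA
  -- Step A
  have stepA : ∀ R : ℕ, ∃ C : ℝ≥0∞, C ≠ ⊤ ∧ ∀ δ : ℝ, 0 < δ → δ ≤ 1 →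
      volume (⋃ c, A δ c ∩ Metric.closedBall 0 (R:ℝ)) ≤ ENNReal.ofReal δ ^ 2 * C := by
    intro R
    set K : ℝ≥0∞ := ↑NNReal.pi * volume (Metric.closedBall (0 : Fin m → ℂ) (R:ℝ)) with hK
    have hKtop : K ≠ ⊤ := ENNReal.mul_ne_top ENNReal.coe_ne_top measure_closedBall_lt_top.ne
    set t : ℝ := (m:ℝ) + 1 + ε with hts
    set S : ℝ≥0∞ := ∑' q : Fin (m+1) → ℤ,
      (if q = 0 then 0 else ((Nf q : ℕ) : ℝ≥0∞) ^ (-t)) with hSdef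
    have hStop : S ≠ ⊤ := aux_lattice (m+1) (Nat.le_add_left 1 m) t (by push_cast; linarith)
    refine ⟨((2*(m+1)*R+3 : ℕ) : ℝ≥0∞) * K * S, ?_, ?_⟩
    · exact ENNReal.mul_ne_top (ENNReal.mul_ne_top (ENNReal.natCast_ne_top _) hKtop) hStop
    intro δ hδ0 hδ1
    have perq : ∀ q : Fin (m+1) → ℤ, ∑' p : ℤ, volume (A δ (q, p) ∩ Metric.closedBall 0 (R:ℝ))
        ≤ ENNReal.ofReal δ ^ 2 * (((2*(m+1)*R+3 : ℕ) : ℝ≥0∞) * K *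
            (if q = 0 then 0 else ((Nf q : ℕ) : ℝ≥0∞) ^ (-t))) := by
      intro q
      by_cases hq : q = 0
      · simp [hA, hq]
      rw [if_neg hq]
      set N : ℕ := Nf q with hNq
      have hN1 : 1 ≤ N := by
        obtain ⟨i, hi⟩ := Function.ne_iff.1 hq
        calc 1 ≤ (q i).natAbs := Int.natAbs_pos.2 hi
          _ ≤ N := Finset.le_sup (f := fun i => (q i).natAbs) (Finset.mem_univ i)
      have hN0R : (0:ℝ) < N := by exact_mod_cast Nat.lt_of_lt_of_le Nat.zero_lt_one hN1
      have hN1R : (1:ℝ) ≤ N := by exact_mod_cast hN1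
      set r : ℝ := δ * (N:ℝ) ^ (-s) with hr
      have hrpow1 : (N:ℝ) ^ (-s) ≤ 1 :=
        Real.rpow_le_one_of_one_le_of_nonpos hN1R (by linarith)
      have hrpow0 : 0 < (N:ℝ) ^ (-s) := Real.rpow_pos_of_pos hN0R _
      have hr0 : 0 < r := by positivity
      have hr1 : r ≤ 1 := by
        calc r ≤ 1 * 1 := mul_le_mul hδ1 hrpow1 hrpow0.le zero_le_one
          _ = 1 := mul_one 1
      have hAq : ∀ p : ℤ, A δ (q, p)
          = {z : Fin (m+1) → ℂ | ‖(p:ℂ) + ∑ i, z i * (q i:ℂ)‖ ≤ r} := by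
        intro p; rw [hA]; simp only [if_neg hq]; rfl
      set M : ℤ := (((m+1) * R * N + 1 : ℕ) : ℤ) with hM
      have hzero : ∀ p : ℤ, p ∉ Finset.Icc (-M) M →
          volume (A δ (q, p) ∩ Metric.closedBall 0 (R:ℝ)) = 0 := by
        intro p hp
        have hempty : A δ (q, p) ∩ Metric.closedBall 0 (R:ℝ) = ∅ := by
          apply Set.eq_empty_iff_forall_notMem.2
          rintro z ⟨h1, h2⟩
          rw [hAq p] at h1
          simp only [Set.mem_setOf_eq] at h1
          have hzq : ‖∑ i, z i * (q i : ℂ)‖ ≤ ((m+1) : ℝ) * ((R:ℝ) * N) := by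
            refine le_trans (norm_sum_le _ _) ?_
            have hterm : ∀ i, ‖z i * (q i:ℂ)‖ ≤ (R:ℝ) * N := by
              intro i
              rw [norm_mul]
              have hz1 : ‖z i‖ ≤ (R:ℝ) :=
                le_trans (norm_le_pi_norm z i) (mem_closedBall_zero_iff.1 h2)
              have hz2 : ‖(q i : ℂ)‖ ≤ (N:ℝ) := by
                rw [Complex.norm_intCast]
                have hle : (q i).natAbs ≤ N :=
                  Finset.le_sup (f := fun i => (q i).natAbs) (Finset.mem_univ i)
                calc |((q i : ℤ):ℝ)| = ((q i).natAbs : ℝ) := by simp [Nat.cast_natAbs]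
                  _ ≤ (N:ℝ) := by exact_mod_cast hle
              exact mul_le_mul hz1 hz2 (norm_nonneg _) (Nat.cast_nonneg R)
            calc ∑ i, ‖z i * (q i:ℂ)‖ ≤ ∑ _i : Fin (m+1), (R:ℝ)*N :=
                  Finset.sum_le_sum fun i _ => hterm i
              _ = ((m+1):ℝ) * ((R:ℝ)*N) := by
                  rw [Finset.sum_const, Finset.card_univ, Fintype.card_fin, nsmul_eq_mul]
                  push_cast; ring
          have habs : |(p:ℝ)| ≤ r + ((m+1):ℝ)*((R:ℝ)*N) := by
            have h3 : ‖((p:ℤ):ℂ)‖ ≤ r + ((m+1):ℝ)*((R:ℝ)*N) := by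
              calc ‖((p:ℤ):ℂ)‖
                  = ‖(((p:ℂ) + ∑ i, z i * (q i:ℂ)) - ∑ i, z i * (q i:ℂ))‖ := by ring_nf
                _ ≤ ‖(p:ℂ) + ∑ i, z i * (q i:ℂ)‖ + ‖∑ i, z i * (q i:ℂ)‖ := norm_sub_le _ _
                _ ≤ r + ((m+1):ℝ)*((R:ℝ)*N) := add_le_add
                    (by exact h1)
                    (by exact hzq)
            rw [Complex.norm_intCast] at h3
            exact h3
          have hpM : |p| ≤ M := by
            have hMr : (M:ℝ) = ((m+1):ℝ)*((R:ℝ)*N) + 1 := by rw [hM]; push_cast; ring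
            have h4 : |(p:ℝ)| ≤ (M:ℝ) := by rw [hMr]; linarith
            exact_mod_cast h4
          exact hp (Finset.mem_Icc.2 (abs_le.1 hpM))
        rw [hempty, measure_empty]
      have cardbound : (Finset.Icc (-M) M).card ≤ (2*(m+1)*R+3) * N := by
        rw [Int.card_Icc]
        have h5 : (M + 1 - -M).toNat = 2*((m+1)*R*N+1)+1 := by rw [hM]; omega
        rw [h5]
        nlinarith [hN1]
      have hNX : (N:ℝ≥0∞) * ENNReal.ofReal (r/(N:ℝ)) ^ 2
          = ENNReal.ofReal δ ^ 2 * (N:ℝ≥0∞) ^ (-t) := by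
        have e1 : r / (N:ℝ) = δ * (N:ℝ) ^ (-s - 1) := by
          rw [hr, mul_div_assoc]
          congr 1
          rw [Real.rpow_sub hN0R, Real.rpow_one]
        have e2 : ENNReal.ofReal (r/(N:ℝ)) = ENNReal.ofReal δ * ((N:ℝ≥0∞)) ^ (-s-1) := by
          rw [e1, ENNReal.ofReal_mul hδ0.le, ← ENNReal.ofReal_rpow_of_pos hN0R,
            ENNReal.ofReal_natCast]
        have hNne0 : (N:ℝ≥0∞) ≠ 0 := by exact_mod_cast Nat.one_le_iff_ne_zero.1 hN1
        have hNnetop : (N:ℝ≥0∞) ≠ ⊤ := ENNReal.natCast_ne_top N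
        calc (N:ℝ≥0∞) * ENNReal.ofReal (r/(N:ℝ)) ^ 2
            = (N:ℝ≥0∞) * (ENNReal.ofReal δ ^ 2 * ((N:ℝ≥0∞) ^ (-s-1)) ^ 2) := by
              rw [e2, mul_pow]
          _ = ENNReal.ofReal δ ^ 2 * ((N:ℝ≥0∞) ^ (1:ℝ) * ((N:ℝ≥0∞) ^ (-s-1)) ^ (2:ℕ)) := by
              rw [ENNReal.rpow_one]; ring
          _ = ENNReal.ofReal δ ^ 2 * ((N:ℝ≥0∞) ^ (1:ℝ) * (N:ℝ≥0∞) ^ ((-s-1)*2)) := by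
              rw [← ENNReal.rpow_natCast ((N:ℝ≥0∞) ^ (-s-1)) 2, ← ENNReal.rpow_mul]
              norm_num
          _ = ENNReal.ofReal δ ^ 2 * (N:ℝ≥0∞) ^ (1 + (-s-1)*2) := by
              rw [← ENNReal.rpow_add _ _ hNne0 hNnetop]
          _ = ENNReal.ofReal δ ^ 2 * (N:ℝ≥0∞) ^ (-t) := by
              congr 1
              rw [hs, hts]; ring
      calc ∑' p : ℤ, volume (A δ (q, p) ∩ Metric.closedBall 0 (R:ℝ))
          = ∑ p ∈ Finset.Icc (-M) M, volume (A δ (q, p) ∩ Metric.closedBall 0 (R:ℝ)) :=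
            tsum_eq_sum hzero
        _ ≤ ∑ _p ∈ Finset.Icc (-M) M, ENNReal.ofReal (r / (N:ℝ)) ^ 2 * K := by
            refine Finset.sum_le_sum fun p _ => ?_
            rw [hAq p, hK, ← mul_assoc]
            exact aux_vol_bound m q hq p r R
        _ = (Finset.Icc (-M) M).card • (ENNReal.ofReal (r / (N:ℝ)) ^ 2 * K) :=
            Finset.sum_const _
        _ ≤ ((2*(m+1)*R+3) * N) • (ENNReal.ofReal (r / (N:ℝ)) ^ 2 * K) := by
            rw [nsmul_eq_mul, nsmul_eq_mul]
            exact mul_le_mul_left (by exact_mod_cast cardbound) _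
        _ = ENNReal.ofReal δ ^ 2 * (((2*(m+1)*R+3 : ℕ) : ℝ≥0∞) * K * (N:ℝ≥0∞) ^ (-t)) := by
            rw [nsmul_eq_mul, Nat.cast_mul]
            calc (((2*(m+1)*R+3 : ℕ) : ℝ≥0∞) * (N:ℝ≥0∞)) * (ENNReal.ofReal (r / (N:ℝ)) ^ 2 * K)
                = ((2*(m+1)*R+3 : ℕ) : ℝ≥0∞) *
                    (((N:ℝ≥0∞) * ENNReal.ofReal (r / (N:ℝ)) ^ 2) * K) := by ring
              _ = ((2*(m+1)*R+3 : ℕ) : ℝ≥0∞) *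
                    ((ENNReal.ofReal δ ^ 2 * (N:ℝ≥0∞) ^ (-t)) * K) := by rw [hNX]
              _ = ENNReal.ofReal δ ^ 2 *
                    (((2*(m+1)*R+3 : ℕ) : ℝ≥0∞) * K * (N:ℝ≥0∞) ^ (-t)) := by ring
    calc volume (⋃ c, A δ c ∩ Metric.closedBall 0 (R:ℝ))
        ≤ ∑' c : (Fin (m+1) → ℤ) × ℤ, volume (A δ c ∩ Metric.closedBall 0 (R:ℝ)) :=
          measure_iUnion_le _
      _ = ∑' q : Fin (m+1) → ℤ, ∑' p : ℤ, volume (A δ (q, p) ∩ Metric.closedBall 0 (R:ℝ)) :=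
          ENNReal.tsum_prod'
      _ ≤ ∑' q : Fin (m+1) → ℤ, ENNReal.ofReal δ ^ 2 * (((2*(m+1)*R+3 : ℕ) : ℝ≥0∞) * K *
            (if q = 0 then 0 else ((Nf q : ℕ) : ℝ≥0∞) ^ (-t))) := ENNReal.tsum_le_tsum perq
      _ = ENNReal.ofReal δ ^ 2 * (((2*(m+1)*R+3 : ℕ) : ℝ≥0∞) * K * S) := by
          rw [ENNReal.tsum_mul_left]
          congr 1
          rw [hSdef, ENNReal.tsum_mul_left]
  -- Step B
  have stepB : ∀ R : ℕ,
      volume (⋂ k : ℕ, ⋃ c, A (1/(k+1)) c ∩ Metric.closedBall 0 (R:ℝ)) = 0 := by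
    intro R
    obtain ⟨C, hC, hbound⟩ := stepA R
    have h1 : ∀ k : ℕ, volume (⋂ k : ℕ, ⋃ c, A (1/(k+1)) c ∩ Metric.closedBall 0 (R:ℝ))
        ≤ ENNReal.ofReal (1/(k+1) : ℝ) ^ 2 * C := by
      intro k
      refine le_trans (measure_mono (Set.iInter_subset _ k)) (hbound _ (by positivity) ?_)
      rw [div_le_one (by positivity)]
      linarith [Nat.cast_nonneg (α := ℝ) k]
    have h2 : Filter.Tendsto (fun k : ℕ => ENNReal.ofReal (1/(k+1) : ℝ) ^ 2 * C)
        Filter.atTop (nhds 0) := by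
      have h3 : Filter.Tendsto (fun k : ℕ => ENNReal.ofReal (1/(k+1) : ℝ) ^ 2)
          Filter.atTop (nhds 0) := by
        have h4 : Filter.Tendsto (fun k : ℕ => ENNReal.ofReal ((1/(k+1) : ℝ) ^ 2))
            Filter.atTop (nhds 0) := by
          have := ENNReal.tendsto_ofReal (tendsto_one_div_add_atTop_nhds_zero_nat.pow 2)
          simpa using this
        exact h4.congr fun k => ENNReal.ofReal_pow (by positivity) 2
      have := ENNReal.Tendsto.mul_const h3 (Or.inr hC)
      simpa using this
    exact le_antisymm (ge_of_tendsto' h2 h1) zero_le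
  -- Step C
  rw [ae_iff]
  apply measure_mono_null (t := ⋃ R : ℕ, ⋂ k : ℕ, ⋃ c,
    A (1/(k+1)) c ∩ Metric.closedBall 0 (R:ℝ)) ?_ (measure_iUnion_null fun R => stepB R)
  intro z hz
  simp only [Set.mem_setOf_eq] at hz
  push_neg at hz
  refine Set.mem_iUnion.2 ⟨⌈‖z‖⌉₊, Set.mem_iInter.2 fun k => ?_⟩
  obtain ⟨p, q, hq, hle⟩ := hz (1/(k+1)) (by positivity)
  refine Set.mem_iUnion.2 ⟨(q, p), ?_, mem_closedBall_zero_iff.2 (Nat.le_ceil _)⟩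
  rw [hA]
  simp only [if_neg hq, Set.mem_setOf_eq]
  exact hle

/-- For almost every `z ∈ ℂⁿ` and every `ε > 0`, there is a constant `κ > 0` with
`|p + z·q| > κ ‖q‖∞ ^ (-(n - 1 + ε)/2)` for all `p ∈ ℤ` and all nonzero `q ∈ ℤⁿ`. -/
theorem stmt_6 (n : ℕ) (hn : 1 ≤ n) :
    ∀ᵐ z : Fin n → ℂ ∂volume, ∀ ε : ℝ, 0 < ε → ∃ κ : ℝ, 0 < κ ∧
      ∀ (p : ℤ) (q : Fin n → ℤ), q ≠ 0 →
        κ * ((Finset.univ.sup fun i => (q i).natAbs : ℕ) : ℝ) ^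
            (-(((n : ℝ) - 1 + ε) / 2)) <
          ‖(p : ℂ) + ∑ i, z i * (q i : ℂ)‖ := by
  obtain ⟨m, rfl⟩ : ∃ m, n = m + 1 := ⟨n - 1, (Nat.succ_pred_eq_of_pos hn).symm⟩
  have hae := ae_all_iff.2 (fun k : ℕ => aux_key m (1/(k+1)) (by positivity))
  filter_upwards [hae] with z hz ε hε
  obtain ⟨k, hk⟩ := exists_nat_one_div_lt hε
  obtain ⟨κ, hκ, H⟩ := hz k
  refine ⟨κ, hκ, fun p q hq => lt_of_le_of_lt ?_ (H p q hq)⟩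
  have hN1R : (1:ℝ) ≤ ((Finset.univ.sup fun i => (q i).natAbs : ℕ) : ℝ) := by
    have : 1 ≤ (Finset.univ.sup fun i => (q i).natAbs : ℕ) := by
      obtain ⟨i, hi⟩ := Function.ne_iff.1 hq
      calc 1 ≤ (q i).natAbs := Int.natAbs_pos.2 hi
        _ ≤ _ := Finset.le_sup (f := fun i => (q i).natAbs) (Finset.mem_univ i)
    exact_mod_cast this
  apply mul_le_mul_of_nonneg_left _ hκ.le
  apply Real.rpow_le_rpow_of_exponent_le hN1R
  push_cast
  linarith [hk.le]
end

section
/- Let N ≥ p ≥ 1, let Ψ2 be an N×p complex matrix whose columns are orthonormal (Ψ2ᴴ·Ψ2 = I_p), and let Ω be a p×p Hermitian positive definite complex matrix. Then for P > 0 the determinant det(I_N + (P/p)·Ψ2·Ω·Ψ2ᴴ) is a positive real number, and the ratio log det(I_N + (P/p)·Ψ2·Ω·Ψ2ᴴ) / log P tends to p as P → ∞. -/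
open Matrix Filter
open scoped ComplexOrder

/-- For `Ψ2` an `N × p` complex matrix with orthonormal columns and `Ω` Hermitian positive
definite, `det (I_N + (P/p) • Ψ2 Ω Ψ2ᴴ)` is a positive real number for every `P > 0`, and
`log det (I_N + (P/p) • Ψ2 Ω Ψ2ᴴ) / log P → p` as `P → ∞`. -/
theorem stmt_8 (N p : ℕ) (hp : 1 ≤ p) (hpN : p ≤ N)
    (Ψ2 : Matrix (Fin N) (Fin p) ℂ) (hΨ2 : Ψ2ᴴ * Ψ2 = 1)
    (Ω : Matrix (Fin p) (Fin p) ℂ) (hΩ : Ω.PosDef) :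
    (∀ P : ℝ, 0 < P →
      ((1 + ((P / p : ℝ) : ℂ) • (Ψ2 * Ω * Ψ2ᴴ)).det.im = 0 ∧
        0 < (1 + ((P / p : ℝ) : ℂ) • (Ψ2 * Ω * Ψ2ᴴ)).det.re)) ∧
    Tendsto (fun P : ℝ =>
        Real.log ((1 + ((P / p : ℝ) : ℂ) • (Ψ2 * Ω * Ψ2ᴴ)).det.re) / Real.log P)
      atTop (nhds (p : ℝ)) := by
  have hH := hΩ.1
  set a : Fin p → ℝ := hH.eigenvalues with ha
  have hapos : ∀ i, 0 < a i := fun i => hΩ.eigenvalues_pos i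
  have hp' : (0:ℝ) < p := by exact_mod_cast hp
  -- Key determinant formula
  have key : ∀ c : ℝ, ((1 : Matrix (Fin N) (Fin N) ℂ) + (c:ℂ) • (Ψ2 * Ω * Ψ2ᴴ)).det
      = ((∏ i, (1 + c * a i) : ℝ) : ℂ) := by
    intro c
    have h1 : (1 : Matrix (Fin N) (Fin N) ℂ) + (c:ℂ) • (Ψ2 * Ω * Ψ2ᴴ)
        = 1 + ((c:ℂ) • (Ψ2 * Ω)) * Ψ2ᴴ := by rw [Matrix.smul_mul, Matrix.mul_assoc]
    rw [h1, Matrix.det_one_add_mul_comm]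
    have h2 : (1 : Matrix (Fin p) (Fin p) ℂ) + Ψ2ᴴ * ((c:ℂ) • (Ψ2 * Ω))
        = 1 + (c:ℂ) • Ω := by
      rw [Matrix.mul_smul, ← Matrix.mul_assoc, hΨ2, Matrix.one_mul]
    rw [h2]
    set U : Matrix (Fin p) (Fin p) ℂ := (hH.eigenvectorUnitary : Matrix (Fin p) (Fin p) ℂ)
      with hU
    have hUU : U * star U = 1 := (Matrix.mem_unitaryGroup_iff).mp hH.eigenvectorUnitary.2
    have hspec := hH.spectral_theorem
    have h3 : (1 : Matrix (Fin p) (Fin p) ℂ) + (c:ℂ) • Ω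
        = U * (Matrix.diagonal (fun i => 1 + (c:ℂ) * (a i : ℂ))) * star U := by
      have hd : Matrix.diagonal (fun i : Fin p => 1 + (c:ℂ) * (a i : ℂ))
          = 1 + (c:ℂ) • Matrix.diagonal (RCLike.ofReal ∘ a) := by
        ext i j
        rcases eq_or_ne i j with h | h
        · subst h
          simp [Matrix.one_apply_eq, mul_comm]
        · simp [Matrix.diagonal_apply_ne _ h, Matrix.one_apply_ne h]
      rw [hd, Matrix.mul_add, Matrix.add_mul, Matrix.mul_one, hUU,
        Matrix.mul_smul, Matrix.smul_mul]
      rw [hspec, Unitary.conjStarAlgAut_apply]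
    rw [h3, Matrix.det_mul_right_comm, hUU, Matrix.one_mul, Matrix.det_diagonal,
      Complex.ofReal_prod]
    exact Finset.prod_congr rfl fun i _ => by push_cast; ring
  constructor
  · intro P hP
    rw [key (P / p)]
    refine ⟨Complex.ofReal_im _, ?_⟩
    rw [Complex.ofReal_re]
    refine Finset.prod_pos fun i _ => ?_
    have h1 : 0 < P / p * a i := mul_pos (div_pos hP hp') (hapos i)
    linarith
  · -- per-term limit
    have hterm : ∀ i : Fin p, Tendsto
        (fun P : ℝ => Real.log (1 + P / p * a i) / Real.log P) atTop (nhds 1) := by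
      intro i
      have haip : 0 < a i / p := div_pos (hapos i) hp'
      have hEq : ∀ᶠ P in atTop, Real.log (1 + P / p * a i) / Real.log P
          = 1 + Real.log (1 / P + a i / p) / Real.log P := by
        filter_upwards [eventually_gt_atTop 1] with P hP1
        have hP0 : (0:ℝ) < P := lt_trans one_pos hP1
        have h1 : 1 + P / p * a i = P * (1 / P + a i / p) := by
          field_simp
        have hpos : 0 < 1 / P + a i / p := by positivity
        have hlogP : 0 < Real.log P := Real.log_pos hP1
        rw [h1, Real.log_mul (ne_of_gt hP0) (ne_of_gt hpos), add_div,
          div_self (ne_of_gt hlogP)]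
      rw [tendsto_congr' hEq]
      have h2 : Tendsto (fun P : ℝ => Real.log (1 / P + a i / p)) atTop
          (nhds (Real.log (a i / p))) := by
        have h2a : Tendsto (fun P : ℝ => 1 / P + a i / p) atTop (nhds (0 + a i / p)) := by
          simpa [one_div] using tendsto_inv_atTop_zero.add
            (tendsto_const_nhds : Tendsto (fun _ : ℝ => a i / p) atTop _)
        rw [zero_add] at h2a
        exact (Real.continuousAt_log (ne_of_gt haip)).tendsto.comp h2a
      have h3 : Tendsto (fun P : ℝ => Real.log (1 / P + a i / p) / Real.log P) atTop
          (nhds 0) := h2.div_atTop Real.tendsto_log_atTop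
      simpa using (tendsto_const_nhds : Tendsto (fun _ : ℝ => (1:ℝ)) atTop _).add h3
    have hsum : Tendsto (fun P : ℝ => ∑ i, Real.log (1 + P / p * a i) / Real.log P)
        atTop (nhds (∑ _i : Fin p, (1:ℝ))) :=
      tendsto_finset_sum _ fun i _ => hterm i
    have hsum' : Tendsto (fun P : ℝ => ∑ i, Real.log (1 + P / p * a i) / Real.log P)
        atTop (nhds (p : ℝ)) := by simpa using hsum
    refine hsum'.congr' ?_
    filter_upwards [eventually_gt_atTop 0] with P hP
    rw [key (P / p), Complex.ofReal_re, Real.log_prod]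
    · rw [Finset.sum_div]
    · intro i _
      have h1 : 0 < P / p * a i := mul_pos (div_pos hP hp') (hapos i)
      intro h; linarith [h.symm ▸ (by linarith : (0:ℝ) < 1 + P / p * a i)]
end

section
/- Let G be an m×l complex matrix and let c ≥ 0 be a real number. Then det(I_m + 2c·G·Gᴴ) and det(I_m + c·G·Gᴴ) are positive real numbers, and log₂ det(I_m + 2c·G·Gᴴ) − log₂ det(I_m + c·G·Gᴴ) ≤ l. -/
open Matrix

lemma det_one_add_smul_hermitian {n : ℕ} {H : Matrix (Fin n) (Fin n) ℂ}
    (hH : H.IsHermitian) (a : ℝ) :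
    (1 + (a : ℂ) • H).det = ∏ j, ((1 + a * hH.eigenvalues j : ℝ) : ℂ) := by
  set U : Matrix (Fin n) (Fin n) ℂ := (hH.eigenvectorUnitary : Matrix (Fin n) (Fin n) ℂ) with hUdef
  have hU : U * star U = 1 := (Matrix.mem_unitaryGroup_iff).mp hH.eigenvectorUnitary.2
  have key : (1 + (a : ℂ) • H)
      = U * (1 + (a : ℂ) • diagonal (RCLike.ofReal ∘ hH.eigenvalues)) * star U := by
    rw [Matrix.mul_add, Matrix.add_mul, Matrix.mul_one, hU]
    rw [Matrix.mul_smul, Matrix.smul_mul]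
    congr 1
    exact congrArg _ hH.spectral_theorem
  rw [key, det_mul_right_comm, hU, one_mul]
  rw [show (1 : Matrix (Fin n) (Fin n) ℂ) = diagonal (fun _ => 1) from (diagonal_one).symm]
  rw [← diagonal_smul, diagonal_add, det_diagonal]
  push_cast
  rfl

/-- For an `m × l` complex matrix `G` and `c ≥ 0`, the determinants
`det (I_m + 2c • G Gᴴ)` and `det (I_m + c • G Gᴴ)` are positive reals, and
`log₂ det (I_m + 2c • G Gᴴ) - log₂ det (I_m + c • G Gᴴ) ≤ l`. -/
theorem stmt_9 (m l : ℕ) (G : Matrix (Fin m) (Fin l) ℂ) (c : ℝ) (hc : 0 ≤ c) :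
    ((1 + ((2 * c : ℝ) : ℂ) • (G * Gᴴ)).det.im = 0 ∧
      0 < (1 + ((2 * c : ℝ) : ℂ) • (G * Gᴴ)).det.re) ∧
    ((1 + ((c : ℝ) : ℂ) • (G * Gᴴ)).det.im = 0 ∧
      0 < (1 + ((c : ℝ) : ℂ) • (G * Gᴴ)).det.re) ∧
    Real.logb 2 ((1 + ((2 * c : ℝ) : ℂ) • (G * Gᴴ)).det.re) -
        Real.logb 2 ((1 + ((c : ℝ) : ℂ) • (G * Gᴴ)).det.re) ≤ l := by
  have hH : (Gᴴ * G).IsHermitian := isHermitian_conjTranspose_mul_self G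
  set μ : Fin l → ℝ := hH.eigenvalues with hμ
  have hμ0 : ∀ j, 0 ≤ μ j := fun j => eigenvalues_conjTranspose_mul_self_nonneg G j
  have hdet : ∀ a : ℝ, (1 + (a : ℂ) • (G * Gᴴ)).det = ((∏ j, (1 + a * μ j) : ℝ) : ℂ) := by
    intro a
    rw [show (a:ℂ) • (G * Gᴴ) = ((a:ℂ) • G) * Gᴴ from (Matrix.smul_mul (a:ℂ) G Gᴴ).symm,
      det_one_add_mul_comm, show Gᴴ * ((a:ℂ) • G) = (a:ℂ) • (Gᴴ * G) from Matrix.mul_smul Gᴴ (a:ℂ) G,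
      det_one_add_smul_hermitian hH a]
    push_cast
    rfl
  have hpos : ∀ a : ℝ, 0 ≤ a → ∀ j, (0:ℝ) < 1 + a * μ j := fun a ha j =>
    lt_of_lt_of_le one_pos (le_add_of_nonneg_right (mul_nonneg ha (hμ0 j)))
  have hprodpos : ∀ a : ℝ, 0 ≤ a → (0:ℝ) < ∏ j, (1 + a * μ j) := fun a ha =>
    Finset.prod_pos fun j _ => hpos a ha j
  have h2c : (0:ℝ) ≤ 2 * c := by linarith
  refine ⟨⟨?_, ?_⟩, ⟨?_, ?_⟩, ?_⟩
  · rw [hdet]; exact Complex.ofReal_im _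
  · rw [hdet, Complex.ofReal_re]; exact hprodpos _ h2c
  · rw [hdet]; exact Complex.ofReal_im _
  · rw [hdet, Complex.ofReal_re]; exact hprodpos _ hc
  · rw [hdet, hdet]
    rw [Complex.ofReal_re, Complex.ofReal_re]
    rw [Real.logb_prod _ _ (fun j _ => (hpos _ h2c j).ne'),
      Real.logb_prod _ _ (fun j _ => (hpos _ hc j).ne'), ← Finset.sum_sub_distrib]
    calc ∑ j, (Real.logb 2 (1 + 2*c * μ j) - Real.logb 2 (1 + c * μ j))
        ≤ ∑ _j : Fin l, (1:ℝ) := by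
          apply Finset.sum_le_sum
          intro j _
          have h1 : (1:ℝ) + 2*c*μ j ≤ 2 * (1 + c * μ j) := by nlinarith [hμ0 j]
          have := Real.logb_le_logb_of_le (b := 2) one_lt_two (hpos _ h2c j) h1
          rw [Real.logb_mul two_ne_zero (hpos _ hc j).ne'] at this
          have h22 : Real.logb 2 2 = 1 := by
            simp [Real.logb]
            norm_num
          linarith
      _ = l := by simp
end

section
/- Let f1, f2 ∈ ℂ with f1 ≠ 0, let a > 0, let Q ≥ 1 be an integer, let ε > 0, and let 0 < κ ≤ 1. Suppose that for all p, q ∈ ℤ with q ≠ 0 one has |p + (f2/f1)·q| > κ·|q|^{−ε/2}. Then for all integers u, v with |u| ≤ 2Q, |v| ≤ 2Q, and (u, v) ≠ (0, 0), the distance satisfies |a·f1·u + a·f2·v| ≥ κ·a·|f1|·(2Q)^{−ε/2}. In particular, the minimum distance of the constellation {f1·U + f2·V : U, V ∈ a·{−Q, …, Q}} is at least κ·a·|f1|·(2Q)^{−ε/2}. -/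
/-- Minimum-distance bound for the constellation `{f1 U + f2 V : U, V ∈ a{-Q,…,Q}}`:
if `|p + (f2/f1) q| > κ |q|^(-ε/2)` for all integers `p` and nonzero integers `q`, then
every nonzero difference `a f1 u + a f2 v` with `|u|, |v| ≤ 2Q` has modulus at least
`κ a |f1| (2Q)^(-ε/2)`. -/
theorem stmt_11 (f1 f2 : ℂ) (hf1 : f1 ≠ 0) (a : ℝ) (ha : 0 < a) (Q : ℤ) (hQ : 1 ≤ Q)
    (ε : ℝ) (hε : 0 < ε) (κ : ℝ) (hκ0 : 0 < κ) (hκ1 : κ ≤ 1)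
    (h : ∀ p q : ℤ, q ≠ 0 →
      κ * |(q : ℝ)| ^ (-(ε / 2)) < ‖(p : ℂ) + f2 / f1 * (q : ℂ)‖) :
    ∀ u v : ℤ, |u| ≤ 2 * Q → |v| ≤ 2 * Q → ¬(u = 0 ∧ v = 0) →
      κ * a * ‖f1‖ * ((2 * Q : ℤ) : ℝ) ^ (-(ε / 2)) ≤
        ‖(a : ℂ) * f1 * (u : ℂ) + (a : ℂ) * f2 * (v : ℂ)‖ := by
  intro u v hu hv huv
  have hA : 0 < ‖f1‖ := by simpa [norm_pos_iff] using hf1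
  have key : ((a : ℂ) * f1 * (u : ℂ) + (a : ℂ) * f2 * (v : ℂ))
      = (a : ℂ) * f1 * ((u : ℂ) + f2 / f1 * (v : ℂ)) := by
    field_simp
  rw [key, norm_mul, norm_mul, Complex.norm_real, Real.norm_eq_abs, abs_of_pos ha]
  have hQ' : (1 : ℝ) ≤ (Q : ℝ) := by exact_mod_cast hQ
  have h2Q : (1 : ℝ) ≤ ((2 * Q : ℤ) : ℝ) := by push_cast; linarith
  have hPpos : 0 < ((2 * Q : ℤ) : ℝ) ^ (-(ε / 2)) :=
    Real.rpow_pos_of_pos (by linarith) _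
  have hP1 : ((2 * Q : ℤ) : ℝ) ^ (-(ε / 2)) ≤ 1 :=
    Real.rpow_le_one_of_one_le_of_nonpos h2Q (by linarith)
  set P := ((2 * Q : ℤ) : ℝ) ^ (-(ε / 2)) with hP
  by_cases hv0 : v = 0
  · have hu0 : u ≠ 0 := fun h' => huv ⟨h', hv0⟩
    subst hv0
    have hu1 : (1 : ℝ) ≤ ‖(u : ℂ) + f2 / f1 * ((0 : ℤ) : ℂ)‖ := by
      simp only [Int.cast_zero, mul_zero, add_zero, Complex.norm_intCast]
      exact_mod_cast Int.one_le_abs hu0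
    have hκP : κ * P ≤ 1 := mul_le_one₀ hκ1 hPpos.le hP1
    calc κ * a * ‖f1‖ * P = (a * ‖f1‖) * (κ * P) := by ring
      _ ≤ (a * ‖f1‖) * 1 :=
        mul_le_mul_of_nonneg_left hκP (mul_pos ha hA).le
      _ = a * ‖f1‖ := by ring
      _ ≤ a * ‖f1‖ * ‖(u : ℂ) + f2 / f1 * ((0 : ℤ) : ℂ)‖ :=
        le_mul_of_one_le_right (mul_pos ha hA).le hu1
  · have h1 := (h u v hv0).le
    have hvabs : |(v : ℝ)| ≤ ((2 * Q : ℤ) : ℝ) := by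
      push_cast
      have hv' := (Int.cast_le (R := ℝ)).mpr hv
      rw [Int.cast_mul, Int.cast_ofNat, Int.cast_abs] at hv'
      exact hv'
    have hv1 : (0 : ℝ) < |(v : ℝ)| := by
      simp only [abs_pos]
      exact_mod_cast hv0
    have hmono : P ≤ |(v : ℝ)| ^ (-(ε / 2)) :=
      Real.rpow_le_rpow_of_nonpos hv1 hvabs (by linarith)
    calc κ * a * ‖f1‖ * P = (a * ‖f1‖) * (κ * P) := by ring
      _ ≤ (a * ‖f1‖) * (κ * |(v : ℝ)| ^ (-(ε / 2))) :=
        mul_le_mul_of_nonneg_left (mul_le_mul_of_nonneg_left hmono hκ0.le)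
          (mul_pos ha hA).le
      _ ≤ (a * ‖f1‖) * ‖(u : ℂ) + f2 / f1 * (v : ℂ)‖ :=
        mul_le_mul_of_nonneg_left h1 (mul_pos ha hA).le
      _ = a * ‖f1‖ * ‖(u : ℂ) + f2 / f1 * (v : ℂ)‖ := by ring
end
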